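/- For each natural number k and each real a ≥ 0, lim_{x → ∞} x^(k+1) [ψ^(k)(x + a) - ψ^(k)(x)] = (-1)^k k! a, where ψ^(k) is the k-th derivative of the digamma function. -/

import Mathlib

open Filter Real Set Finset

noncomputable def digamma : ℝ → ℝ := deriv (fun x => Real.log (Real.Gamma x))

namespace Stm

/-- `U m x = ∑_{j≥0} 1/(x+j)^m`. -/
noncomputable def U (m : ℕ) (x : ℝ) : ℝ := ∑' j : ℕ, 1 / (x + j) ^ m

lemma base_le {x : ℝ} (hx : 0 < x) (j : ℕ) : min x 1 * (1 + j) ≤ x + j := by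
  have h1 : min x 1 ≤ x := min_le_left _ _
  have h2 : min x 1 ≤ 1 := min_le_right _ _
  have h3 : (0:ℝ) ≤ j := Nat.cast_nonneg j
  nlinarith

lemma summable_U {m : ℕ} (hm : 2 ≤ m) {x : ℝ} (hx : 0 < x) :
    Summable (fun j : ℕ => 1 / (x + j) ^ m) := by
  have hK : 0 < min x 1 := lt_min hx one_pos
  have hbase : Summable (fun j : ℕ => 1 / ((1:ℝ) + j) ^ 2) := by
    have h := summable_one_div_nat_pow.mpr (le_refl 2)
    have := (summable_nat_add_iff 1).mpr h
    refine this.congr fun j => ?_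
    push_cast
    ring_nf
  have := hbase.mul_left ((min x 1) ^ m)⁻¹
  refine Summable.of_nonneg_of_le (fun j => by positivity) (fun j => ?_) this
  have h1 : min x 1 * (1 + j) ≤ x + j := base_le hx j
  have h2 : (min x 1 * (1 + j)) ^ m ≤ (x + j) ^ m :=
    pow_le_pow_left₀ (by positivity) h1 m
  have h3 : ((1:ℝ) + j) ^ 2 ≤ (1 + j) ^ m :=
    pow_le_pow_right₀ (by have : (0:ℝ) ≤ j := Nat.cast_nonneg j; linarith) hm
  have h4 : (min x 1) ^ m * (1 + j) ^ 2 ≤ (x + j) ^ m := by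
    calc (min x 1) ^ m * ((1:ℝ) + j) ^ 2 ≤ (min x 1) ^ m * (1 + j) ^ m := by
          exact mul_le_mul_of_nonneg_left h3 (by positivity)
      _ = (min x 1 * (1 + j)) ^ m := (mul_pow _ _ _).symm
      _ ≤ (x + j) ^ m := h2
  rw [one_div]
  rw [show ((min x 1) ^ m)⁻¹ * (1 / ((1:ℝ)+j)^2) = ((min x 1) ^ m * (1+j)^2)⁻¹ by
    rw [one_div, mul_inv]]
  exact inv_anti₀ (by positivity) h4

lemma hasDerivAt_one_div_pow {m : ℕ} (hm : 1 ≤ m) {t : ℝ} (ht : 0 < t) :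
    HasDerivAt (fun z : ℝ => 1 / z ^ m) (-(m : ℝ) / t ^ (m + 1)) t := by
  have h := (hasDerivAt_pow m t).inv (pow_ne_zero m ht.ne')
  have hval : -(↑m * t ^ (m - 1)) / (t ^ m) ^ 2 = -(m : ℝ) / t ^ (m + 1) := by
    rw [← pow_mul, neg_div, neg_div, neg_inj, div_eq_div_iff (by positivity) (by positivity)]
    rw [mul_assoc, ← pow_add]
    congr 2
    omega
  simpa only [one_div, hval, Pi.inv_def] using h

lemma hasDerivAt_one_div_pow_shift {m : ℕ} (hm : 1 ≤ m) {c y : ℝ} (h : 0 < y + c) :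
    HasDerivAt (fun z : ℝ => 1 / (z + c) ^ m) (-(m : ℝ) / (y + c) ^ (m + 1)) y := by
  have := (hasDerivAt_one_div_pow hm h).comp y ((hasDerivAt_id y).add_const c)
  simpa [Function.comp_def] using this

/-- MVT bounds for the difference of reciprocal powers. -/
lemma key_bounds {m : ℕ} (hm : 1 ≤ m) {b y : ℝ} (hb : 0 < b) (hy : 0 < y) :
    b * m / (y + b) ^ (m + 1) ≤ 1 / y ^ m - 1 / (y + b) ^ m ∧
      1 / y ^ m - 1 / (y + b) ^ m ≤ b * m / y ^ (m + 1) := by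
  have hyb : y < y + b := by linarith
  have hcont : ContinuousOn (fun t : ℝ => -(1 / t ^ m)) (Icc y (y + b)) := by
    refine (ContinuousOn.div continuousOn_const (continuousOn_pow m) fun t ht => ?_).neg
    exact pow_ne_zero _ (lt_of_lt_of_le hy ht.1).ne'
  have hderiv : ∀ t ∈ Ioo y (y + b),
      HasDerivAt (fun t : ℝ => -(1 / t ^ m)) ((m : ℝ) / t ^ (m + 1)) t := by
    intro t ht
    have ht0 : 0 < t := lt_trans hy ht.1
    simpa [neg_div, neg_neg, Pi.neg_def] using (hasDerivAt_one_div_pow hm ht0).neg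
  obtain ⟨c, hc, hceq⟩ := exists_hasDerivAt_eq_slope (fun t : ℝ => -(1 / t ^ m))
    (fun t => (m : ℝ) / t ^ (m + 1)) hyb hcont hderiv
  have hc0 : 0 < c := lt_trans hy hc.1
  have hdiff : 1 / y ^ m - 1 / (y + b) ^ m = b * ((m : ℝ) / c ^ (m + 1)) := by
    have : (m : ℝ) / c ^ (m + 1) = (1 / y ^ m - 1 / (y + b) ^ m) / b := by
      rw [hceq]; ring_nf
    rw [this]
    field_simp
  constructor
  · rw [hdiff]
    rw [show b * ((m:ℝ) / c ^ (m+1)) = b * m / c ^ (m+1) by ring]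
    gcongr
    exact hc.2.le
  · rw [hdiff]
    rw [show b * ((m:ℝ) / c ^ (m+1)) = b * m / c ^ (m+1) by ring]
    gcongr
    exact hc.1.le

lemma hasSum_telescope {m : ℕ} (hm : 1 ≤ m) {x : ℝ} (hx : 0 < x) :
    HasSum (fun j : ℕ => 1 / (x + j) ^ m - 1 / ((x + j) + 1) ^ m) (1 / x ^ m) := by
  have hnonneg : ∀ j : ℕ, 0 ≤ 1 / (x + j) ^ m - 1 / ((x + j) + 1) ^ m := by
    intro j
    have hxj : (0:ℝ) < x + j := by positivity
    have : (1:ℝ) / ((x + j) + 1) ^ m ≤ 1 / (x + j) ^ m :=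
      one_div_le_one_div_of_le (by positivity) (pow_le_pow_left₀ hxj.le (by linarith) m)
    linarith
  rw [hasSum_iff_tendsto_nat_of_nonneg hnonneg]
  have hsum : ∀ n : ℕ, ∑ i ∈ range n, (1 / (x + i) ^ m - 1 / ((x + i) + 1) ^ m)
      = 1 / (x + (0:ℕ)) ^ m - 1 / (x + n) ^ m := by
    intro n
    rw [← Finset.sum_range_sub' (fun j : ℕ => 1 / (x + j) ^ m) n]
    refine Finset.sum_congr rfl fun i _ => ?_
    push_cast
    ring_nf
  simp only [hsum]
  have hm0 : m ≠ 0 := by omega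
  have hbase : Tendsto (fun n : ℕ => x + (n:ℝ)) atTop atTop :=
    tendsto_atTop_add_const_left atTop x tendsto_natCast_atTop_atTop
  have h1 : Tendsto (fun n : ℕ => 1 / (x + (n:ℝ)) ^ m) atTop (nhds 0) := by
    simpa [one_div, Function.comp_def, Pi.inv_def] using ((tendsto_pow_atTop hm0).comp hbase).inv_tendsto_atTop
  simp only [Nat.cast_zero, add_zero]
  simpa using tendsto_const_nhds.sub h1

lemma U_shift {m : ℕ} (hm : 2 ≤ m) {x : ℝ} (hx : 0 < x) :
    U m x = 1 / x ^ m + U m (x + 1) := by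
  rw [U, (summable_U hm hx).tsum_eq_zero_add]
  congr 1
  · norm_num
  · rw [U]
    refine tsum_congr fun j => ?_
    push_cast
    ring_nf

lemma U_lower {m : ℕ} (hm : 1 ≤ m) {x : ℝ} (hx : 0 < x) :
    1 / x ^ m ≤ m * U (m + 1) x := by
  have htel := hasSum_telescope hm hx
  have hs : Summable (fun j : ℕ => (m : ℝ) * (1 / (x + j) ^ (m + 1))) :=
    (summable_U (by omega) hx).mul_left _
  have hle : ∀ j : ℕ, 1 / (x + j) ^ m - 1 / ((x + j) + 1) ^ m ≤ (m:ℝ) * (1 / (x + j) ^ (m + 1)) := by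
    intro j
    have h := (key_bounds hm one_pos (show (0:ℝ) < x + j by positivity)).2
    calc 1 / (x + j) ^ m - 1 / ((x + j) + 1) ^ m ≤ 1 * m / (x + j) ^ (m + 1) := h
      _ = (m:ℝ) * (1 / (x + j) ^ (m + 1)) := by ring
  have := htel.summable.tsum_le_tsum hle hs
  rw [htel.tsum_eq, tsum_mul_left] at this
  exact this

lemma U_upper {m : ℕ} (hm : 1 ≤ m) {x : ℝ} (hx : 0 < x) :
    (m : ℝ) * U (m + 1) x ≤ 1 / x ^ m + m / x ^ (m + 1) := by
  have htel := hasSum_telescope hm hx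
  have hs1 : Summable (fun j : ℕ => (m : ℝ) * (1 / ((x + 1) + j) ^ (m + 1))) :=
    (summable_U (by omega) (by linarith : (0:ℝ) < x + 1)).mul_left _
  have hle : ∀ j : ℕ, (m:ℝ) * (1 / ((x + 1) + j) ^ (m + 1))
      ≤ 1 / (x + j) ^ m - 1 / ((x + j) + 1) ^ m := by
    intro j
    have h := (key_bounds hm one_pos (show (0:ℝ) < x + j by positivity)).1
    calc (m:ℝ) * (1 / ((x + 1) + j) ^ (m + 1)) = 1 * m / ((x + j) + 1) ^ (m + 1) := by ring_nf
      _ ≤ 1 / (x + j) ^ m - 1 / ((x + j) + 1) ^ m := h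
  have h2 := hs1.tsum_le_tsum hle htel.summable
  rw [htel.tsum_eq, tsum_mul_left] at h2
  have h3 : (m : ℝ) * U (m + 1) (x + 1) ≤ 1 / x ^ m := h2
  have h4 : U (m + 1) x = 1 / x ^ (m + 1) + U (m + 1) (x + 1) := U_shift (by omega) hx
  rw [h4]
  have : (m:ℝ) * (1 / x ^ (m+1)) = m / x ^ (m+1) := by ring
  nlinarith [this]

lemma tendsto_U {m : ℕ} (hm : 1 ≤ m) :
    Tendsto (fun x : ℝ => x ^ m * U (m + 1) x) atTop (nhds (1 / m)) := by
  have hm0 : (0:ℝ) < m := by exact_mod_cast hm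
  apply tendsto_of_tendsto_of_tendsto_of_le_of_le' (tendsto_const_nhds (x := 1 / (m:ℝ)))
    (f := fun x : ℝ => x ^ m * U (m + 1) x) (h := fun x : ℝ => 1 / m + 1 / x)
  · simpa [one_div] using tendsto_const_nhds.add (tendsto_inv_atTop_zero (𝕜 := ℝ))
  · filter_upwards [eventually_gt_atTop (0:ℝ)] with x hx
    have h := U_lower hm hx
    have hxm : (0:ℝ) < x ^ m := by positivity
    rw [div_le_iff₀ hm0]
    have h5 := mul_le_mul_of_nonneg_left h hxm.le
    rw [mul_one_div_cancel (ne_of_gt hxm)] at h5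
    nlinarith [h5]
  · filter_upwards [eventually_gt_atTop (0:ℝ)] with x hx
    have h := U_upper hm hx
    have hxm : (0:ℝ) < x ^ m := by positivity
    have h2 := mul_le_mul_of_nonneg_left h (le_of_lt hxm)
    have e1 : x ^ m * (1 / x ^ m) = 1 := mul_one_div_cancel (ne_of_gt hxm)
    have e2 : x ^ m * ((m:ℝ) / x ^ (m+1)) = m / x := by
      rw [pow_succ]
      field_simp
    rw [mul_add, e1, e2] at h2
    have h3 : x ^ m * U (m+1) x ≤ (1 + (m:ℝ)/x)/m := by
      rw [le_div_iff₀ hm0]; nlinarith [h2]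
    have h4 : (1 + (m:ℝ)/x)/m = 1/m + 1/x := by
      field_simp
    linarith [h3, h4.le]
lemma tendsto_main {m : ℕ} (hm : 1 ≤ m) {a : ℝ} (ha : 0 < a) :
    Tendsto (fun x : ℝ => x ^ m * ∑' j : ℕ, (1 / (x + j) ^ m - 1 / (x + a + j) ^ m))
      atTop (nhds a) := by
  have hm0 : (0:ℝ) < m := by exact_mod_cast hm
  have hB : Tendsto (fun x : ℝ => (a * m) * (x ^ m * U (m + 1) x)) atTop (nhds a) := by
    have := (tendsto_U hm).const_mul (a * (m:ℝ))
    rwa [show (a * (m:ℝ)) * (1 / m) = a by field_simp] at this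
  have hshift : Tendsto (fun x : ℝ => x + a) atTop atTop :=
    tendsto_atTop_add_const_right atTop a tendsto_id
  have h1 : Tendsto (fun x : ℝ => (x + a) ^ m * U (m + 1) (x + a)) atTop (nhds (1 / m)) :=
    (tendsto_U hm).comp hshift
  have h2 : Tendsto (fun x : ℝ => x / (x + a)) atTop (nhds 1) := by
    have h0 : Tendsto (fun x : ℝ => a / (x + a)) atTop (nhds 0) :=
      tendsto_const_nhds.div_atTop hshift
    have h3 := (tendsto_const_nhds (x := (1:ℝ))).sub h0
    rw [sub_zero] at h3
    apply Tendsto.congr' _ h3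
    filter_upwards [eventually_gt_atTop (0:ℝ)] with x hx
    have hxa : x + a ≠ 0 := by positivity
    field_simp
    ring
  have hA : Tendsto
      (fun x : ℝ => (a * m) * ((x / (x + a)) ^ m * ((x + a) ^ m * U (m + 1) (x + a))))
      atTop (nhds a) := by
    have := ((h2.pow m).mul h1).const_mul (a * (m:ℝ))
    rwa [show (a * (m:ℝ)) * (1 ^ m * (1 / m)) = a by field_simp; simp] at this
  have hA' : Tendsto (fun x : ℝ => x ^ m * ((a * m) * U (m + 1) (x + a))) atTop (nhds a) := by
    apply Tendsto.congr' _ hA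
    filter_upwards [eventually_gt_atTop (0:ℝ)] with x hx
    have hxa : (0:ℝ) < x + a := by linarith
    have hcanc : (x / (x + a)) ^ m * (x + a) ^ m = x ^ m := by
      rw [div_pow, div_mul_cancel₀]
      exact pow_ne_zero _ hxa.ne'
    calc (a * (m:ℝ)) * ((x / (x+a)) ^ m * ((x+a) ^ m * U (m+1) (x+a)))
        = ((x / (x+a)) ^ m * (x+a) ^ m) * ((a * m) * U (m+1) (x+a)) := by ring
      _ = x ^ m * ((a * m) * U (m+1) (x+a)) := by rw [hcanc]
  apply tendsto_of_tendsto_of_tendsto_of_le_of_le' hA' hB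
  · filter_upwards [eventually_gt_atTop (0:ℝ)] with x hx
    have hxa : (0:ℝ) < x + a := by linarith
    have hxm : (0:ℝ) ≤ x ^ m := by positivity
    have Sxa : Summable (fun j : ℕ => (a * (m:ℝ)) * (1 / (x + a + j) ^ (m + 1))) :=
      (summable_U (by omega) hxa).mul_left _
    have Sx : Summable (fun j : ℕ => (a * (m:ℝ)) * (1 / (x + j) ^ (m + 1))) :=
      (summable_U (by omega) hx).mul_left _
    have hub : ∀ j : ℕ, 1 / (x + j) ^ m - 1 / (x + a + j) ^ m
        ≤ (a * (m:ℝ)) * (1 / (x + j) ^ (m + 1)) := by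
      intro j
      have h := (key_bounds hm ha (show (0:ℝ) < x + j by positivity)).2
      rw [add_right_comm x (j:ℝ) a] at h
      calc 1 / (x + j) ^ m - 1 / (x + a + j) ^ m ≤ a * m / (x + j) ^ (m + 1) := h
        _ = (a * m) * (1 / (x + j) ^ (m + 1)) := by ring
    have hlb : ∀ j : ℕ, (a * (m:ℝ)) * (1 / (x + a + j) ^ (m + 1))
        ≤ 1 / (x + j) ^ m - 1 / (x + a + j) ^ m := by
      intro j
      have h := (key_bounds hm ha (show (0:ℝ) < x + j by positivity)).1
      rw [add_right_comm x (j:ℝ) a] at h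
      calc (a * (m:ℝ)) * (1 / (x + a + j) ^ (m + 1)) = a * m / (x + a + j) ^ (m + 1) := by ring
        _ ≤ 1 / (x + j) ^ m - 1 / (x + a + j) ^ m := h
    have hTnn : ∀ j : ℕ, 0 ≤ 1 / (x + j) ^ m - 1 / (x + a + j) ^ m := by
      intro j
      refine le_trans ?_ (hlb j)
      positivity
    have ST : Summable (fun j : ℕ => 1 / (x + j) ^ m - 1 / (x + a + j) ^ m) :=
      Summable.of_nonneg_of_le hTnn hub Sx
    have := Sxa.tsum_le_tsum hlb ST
    rw [tsum_mul_left] at this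
    exact mul_le_mul_of_nonneg_left this hxm
  · filter_upwards [eventually_gt_atTop (0:ℝ)] with x hx
    have hxa : (0:ℝ) < x + a := by linarith
    have hxm : (0:ℝ) ≤ x ^ m := by positivity
    have Sx : Summable (fun j : ℕ => (a * (m:ℝ)) * (1 / (x + j) ^ (m + 1))) :=
      (summable_U (by omega) hx).mul_left _
    have hub : ∀ j : ℕ, 1 / (x + j) ^ m - 1 / (x + a + j) ^ m
        ≤ (a * (m:ℝ)) * (1 / (x + j) ^ (m + 1)) := by
      intro j
      have h := (key_bounds hm ha (show (0:ℝ) < x + j by positivity)).2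
      rw [add_right_comm x (j:ℝ) a] at h
      calc 1 / (x + j) ^ m - 1 / (x + a + j) ^ m ≤ a * m / (x + j) ^ (m + 1) := h
        _ = (a * m) * (1 / (x + j) ^ (m + 1)) := by ring
    have hlb : ∀ j : ℕ, (a * (m:ℝ)) * (1 / (x + a + j) ^ (m + 1))
        ≤ 1 / (x + j) ^ m - 1 / (x + a + j) ^ m := by
      intro j
      have h := (key_bounds hm ha (show (0:ℝ) < x + j by positivity)).1
      rw [add_right_comm x (j:ℝ) a] at h
      calc (a * (m:ℝ)) * (1 / (x + a + j) ^ (m + 1)) = a * m / (x + a + j) ^ (m + 1) := by ring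
        _ ≤ 1 / (x + j) ^ m - 1 / (x + a + j) ^ m := h
    have hTnn : ∀ j : ℕ, 0 ≤ 1 / (x + j) ^ m - 1 / (x + a + j) ^ m := by
      intro j
      refine le_trans ?_ (hlb j)
      positivity
    have ST : Summable (fun j : ℕ => 1 / (x + j) ^ m - 1 / (x + a + j) ^ m) :=
      Summable.of_nonneg_of_le hTnn hub Sx
    have := ST.tsum_le_tsum hub Sx
    rw [tsum_mul_left] at this
    have h9 := mul_le_mul_of_nonneg_left this hxm
    calc x ^ m * ∑' j : ℕ, (1 / (x + j) ^ m - 1 / (x + a + j) ^ m)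
        ≤ x ^ m * ((a * (m:ℝ)) * U (m + 1) x) := h9
      _ = (a * m) * (x ^ m * U (m + 1) x) := by ring
lemma x_ne_neg_nat {x : ℝ} (hx : 0 < x) : ∀ m : ℕ, x ≠ -m := fun m =>
  (lt_of_le_of_lt (neg_nonpos.mpr (Nat.cast_nonneg m)) hx).ne'

lemma hasDerivAt_logGamma {x : ℝ} (hx : 0 < x) :
    HasDerivAt (fun y : ℝ => Real.log (Real.Gamma y)) (digamma x) x := by
  have h : DifferentiableAt ℝ (fun y : ℝ => Real.log (Real.Gamma y)) x :=
    (Real.differentiableAt_Gamma (x_ne_neg_nat hx)).log (Real.Gamma_pos_of_pos hx).ne'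
  exact h.hasDerivAt

lemma hasDerivAt_log_shift {c y : ℝ} (h : 0 < y + c) :
    HasDerivAt (fun z : ℝ => Real.log (z + c)) (1 / (y + c)) y := by
  have := (Real.hasDerivAt_log h.ne').comp y ((hasDerivAt_id y).add_const c)
  simpa [one_div, Function.comp_def] using this

lemma log_GammaSeq_eq {n : ℕ} (hn : 1 ≤ n) {y : ℝ} (hy : 0 < y) :
    Real.log (Real.GammaSeq y n)
      = y * Real.log n + Real.log (n.factorial : ℝ) - ∑ j ∈ range (n + 1), Real.log (y + j) := by
  have hn0 : (0:ℝ) < n := by exact_mod_cast hn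
  have hfac : (0:ℝ) < (n.factorial : ℝ) := by exact_mod_cast n.factorial_pos
  have hprod : (0:ℝ) < ∏ j ∈ range (n + 1), (y + j) :=
    Finset.prod_pos fun j _ => by
      have : (0:ℝ) ≤ j := Nat.cast_nonneg j
      linarith
  have hrpow : (0:ℝ) < (n:ℝ) ^ y := Real.rpow_pos_of_pos hn0 y
  rw [Real.GammaSeq, Real.log_div (by positivity) hprod.ne',
    Real.log_mul hrpow.ne' hfac.ne', Real.log_rpow hn0,
    Real.log_prod (fun j _ => by positivity)]

lemma hasDerivAt_log_GammaSeq {n : ℕ} (hn : 1 ≤ n) {y : ℝ} (hy : 0 < y) :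
    HasDerivAt (fun z : ℝ => Real.log (Real.GammaSeq z n))
      (Real.log n - ∑ j ∈ range (n + 1), 1 / (y + j)) y := by
  have hg : HasDerivAt (fun z : ℝ => z * Real.log n + Real.log (n.factorial : ℝ)
      - ∑ j ∈ range (n + 1), Real.log (z + j))
      (Real.log n - ∑ j ∈ range (n + 1), 1 / (y + j)) y := by
    apply HasDerivAt.sub
    · exact (hasDerivAt_mul_const _).add_const _
    · exact HasDerivAt.fun_sum fun j _ => hasDerivAt_log_shift
        (by have : (0:ℝ) ≤ j := Nat.cast_nonneg j; linarith)
  apply hg.congr_of_eventuallyEq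
  filter_upwards [isOpen_Ioi.mem_nhds hy] with z (hz : z ∈ Set.Ioi 0)
  exact log_GammaSeq_eq hn hz

lemma digamma_sub_digamma {a : ℝ} (ha : 0 < a) {x : ℝ} (hx : 0 < x) :
    digamma (x + a) - digamma x = ∑' j : ℕ, (1 / (x + j) - 1 / (x + a + j)) := by
  set c := x / 2 with hcdef
  have hc0 : 0 < c := by positivity
  have hsum_u : Summable (fun j : ℕ => a * (1 / (c + j) ^ 2)) :=
    (summable_U le_rfl hc0).mul_left a
  have hG : TendstoUniformlyOn
      (fun (N : ℕ) (y : ℝ) => ∑ j ∈ range N, (1 / (y + j) - 1 / (y + a + j)))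
      (fun y => ∑' j : ℕ, (1 / (y + j) - 1 / (y + a + j))) atTop (Ioi c) := by
    apply tendstoUniformlyOn_tsum_nat hsum_u
    intro j y hy
    have hcy : c < y := hy
    have hj0 : (0:ℝ) ≤ j := Nat.cast_nonneg j
    have hyj : (0:ℝ) < y + j := by linarith
    have hyaj : (0:ℝ) < y + a + j := by linarith
    have he : 1 / (y + j) - 1 / (y + a + j) = a / ((y + j) * (y + a + j)) := by
      field_simp
      ring
    rw [Real.norm_eq_abs, he, abs_of_nonneg (le_of_lt (div_pos ha (mul_pos hyj hyaj)))]
    have h2 : (c + j) ^ 2 ≤ (y + j) * (y + a + j) := by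
      have hj : (0:ℝ) ≤ j := Nat.cast_nonneg j
      nlinarith
    calc a / ((y + j) * (y + a + j)) ≤ a / (c + j) ^ 2 := by
          apply div_le_div_of_nonneg_left ha.le (by positivity) h2
      _ = a * (1 / (c + j) ^ 2) := by ring
  have hF' : TendstoUniformlyOn
      (fun (n : ℕ) (y : ℝ) => ∑ j ∈ range (n + 1), (1 / (y + j) - 1 / (y + a + j)))
      (fun y => ∑' j : ℕ, (1 / (y + j) - 1 / (y + a + j))) atTop (Ioi c) :=
    fun v hv => (tendsto_add_atTop_nat 1).eventually (hG v hv)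
  have hF : ∀ᶠ n in atTop, ∀ y ∈ Ioi c, HasDerivAt
      (fun z => Real.log (Real.GammaSeq (z + a) n) - Real.log (Real.GammaSeq z n))
      (∑ j ∈ range (n + 1), (1 / (y + j) - 1 / (y + a + j))) y := by
    filter_upwards [eventually_ge_atTop 1] with n hn
    intro y hy
    have hy0 : 0 < y := lt_trans hc0 hy
    have hya : 0 < y + a := by linarith
    have h1 : HasDerivAt (fun z : ℝ => Real.log (Real.GammaSeq (z + a) n))
        (Real.log n - ∑ j ∈ range (n + 1), 1 / (y + a + j)) y :=
      HasDerivAt.comp_add_const y a (hasDerivAt_log_GammaSeq hn hya)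
    have h2 := hasDerivAt_log_GammaSeq hn hy0
    have hval : ∑ j ∈ range (n + 1), (1 / (y + j) - 1 / (y + a + j))
        = (Real.log n - ∑ j ∈ range (n + 1), 1 / (y + a + j))
          - (Real.log n - ∑ j ∈ range (n + 1), 1 / (y + j)) := by
      rw [Finset.sum_sub_distrib]
      ring
    rw [hval]
    exact h1.sub h2
  have hFlim : ∀ y ∈ Ioi c, Tendsto
      (fun n : ℕ => Real.log (Real.GammaSeq (y + a) n) - Real.log (Real.GammaSeq y n))
      atTop (nhds (Real.log (Real.Gamma (y + a)) - Real.log (Real.Gamma y))) := by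
    intro y hy
    have hy0 : 0 < y := lt_trans hc0 hy
    have hya : 0 < y + a := by linarith
    have l1 : Tendsto (fun n : ℕ => Real.log (Real.GammaSeq (y + a) n)) atTop
        (nhds (Real.log (Real.Gamma (y + a)))) := by
      have := (Real.continuousAt_log (Real.Gamma_pos_of_pos hya).ne').tendsto.comp
        (Real.GammaSeq_tendsto_Gamma (y + a))
      simpa [Function.comp_def] using this
    have l2 : Tendsto (fun n : ℕ => Real.log (Real.GammaSeq y n)) atTop
        (nhds (Real.log (Real.Gamma y))) := by
      have := (Real.continuousAt_log (Real.Gamma_pos_of_pos hy0).ne').tendsto.comp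
        (Real.GammaSeq_tendsto_Gamma y)
      simpa [Function.comp_def] using this
    exact l1.sub l2
  have hD := hasDerivAt_of_tendstoUniformlyOn isOpen_Ioi hF' hF hFlim
    (show x ∈ Ioi c from Set.mem_Ioi.mpr (by rw [hcdef]; linarith))
  have hD2 : HasDerivAt (fun y : ℝ => Real.log (Real.Gamma (y + a)) - Real.log (Real.Gamma y))
      (digamma (x + a) - digamma x) x :=
    (HasDerivAt.comp_add_const x a (hasDerivAt_logGamma (by linarith))).sub (hasDerivAt_logGamma hx)
  exact hD2.unique hD
lemma digamma_add_one {x : ℝ} (hx : 0 < x) : digamma (x + 1) = digamma x + 1 / x := by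
  have h1 : HasDerivAt (fun y : ℝ => Real.log (Real.Gamma (y + 1))) (digamma (x + 1)) x :=
    HasDerivAt.comp_add_const x 1 (hasDerivAt_logGamma (by linarith))
  have h2 : HasDerivAt (fun y : ℝ => Real.log (Real.Gamma y) + Real.log y)
      (digamma x + 1 / x) x := by
    have := (hasDerivAt_logGamma hx).add (Real.hasDerivAt_log hx.ne')
    simpa [one_div, Pi.add_def] using this
  have heq : (fun y : ℝ => Real.log (Real.Gamma (y + 1))) =ᶠ[nhds x]
      (fun y : ℝ => Real.log (Real.Gamma y) + Real.log y) := by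
    filter_upwards [isOpen_Ioi.mem_nhds hx] with y (hy : y ∈ Set.Ioi 0)
    rw [Real.Gamma_add_one (ne_of_gt hy), Real.log_mul (ne_of_gt hy)
      (Real.Gamma_pos_of_pos hy).ne']
    ring
  exact h1.unique (h2.congr_of_eventuallyEq heq)

noncomputable def Vf (x : ℝ) : ℝ := ∑' j : ℕ, (1 / (1 + (j:ℝ)) - 1 / (x + j))

lemma summable_Vf {x : ℝ} (hx : 0 < x) :
    Summable (fun j : ℕ => 1 / (1 + (j:ℝ)) - 1 / (x + j)) := by
  have hK : 0 < min x 1 := lt_min hx one_pos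
  have hb : Summable (fun j : ℕ => (|x - 1| / min x 1) * (1 / ((1:ℝ) + j) ^ 2)) :=
    (summable_U le_rfl one_pos).mul_left _
  refine Summable.of_norm (Summable.of_nonneg_of_le (fun j => norm_nonneg _) (fun j => ?_) hb)
  have hj0 : (0:ℝ) ≤ j := Nat.cast_nonneg j
  have hj1 : (0:ℝ) < 1 + j := by linarith
  have hxj : (0:ℝ) < x + j := by linarith
  have he : 1 / (1 + (j:ℝ)) - 1 / (x + j) = (x - 1) / ((1 + j) * (x + j)) := by
    field_simp
    ring
  rw [Real.norm_eq_abs, he, abs_div, abs_of_pos (mul_pos hj1 hxj)]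
  have h2 : min x 1 * ((1 + (j:ℝ)) * (1 + j)) ≤ (1 + j) * (x + j) := by
    have hbl := base_le hx j
    nlinarith
  calc |x - 1| / ((1 + (j:ℝ)) * (x + j))
      ≤ |x - 1| / (min x 1 * ((1 + (j:ℝ)) * (1 + j))) := by
        apply div_le_div_of_nonneg_left (abs_nonneg _) (by positivity) h2
    _ = |x - 1| / min x 1 * (1 / ((1:ℝ) + j) ^ 2) := by
        rw [sq]
        field_simp
  
lemma digamma_eq_of_one_le {x : ℝ} (h1 : 1 ≤ x) : digamma x = digamma 1 + Vf x := by
  rcases eq_or_lt_of_le h1 with rfl | h1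
  · simp [Vf]
  · have ha : 0 < x - 1 := by linarith
    have hd := digamma_sub_digamma ha one_pos
    rw [show (1:ℝ) + (x - 1) = x by ring] at hd
    rw [Vf]
    linarith

lemma digamma_eq {x : ℝ} (hx : 0 < x) : digamma x = digamma 1 + Vf x := by
  rcases le_or_gt 1 x with h1 | h1
  · exact digamma_eq_of_one_le h1
  · have hx1 : (1:ℝ) ≤ x + 1 := by linarith
    have hrec := digamma_add_one hx
    have h2 := digamma_eq_of_one_le hx1
    have hs1 := summable_Vf (show (0:ℝ) < x + 1 by linarith)
    have hs2 := summable_Vf hx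
    have htel := hasSum_telescope (le_refl 1) hx
    have h3 : ∑' j : ℕ, ((1 / (1 + (j:ℝ)) - 1 / (x + 1 + j)) - (1 / (1 + (j:ℝ)) - 1 / (x + j)))
        = Vf (x + 1) - Vf x := hs1.tsum_sub hs2
    have h4 : ∑' j : ℕ, ((1 / (1 + (j:ℝ)) - 1 / (x + 1 + j)) - (1 / (1 + (j:ℝ)) - 1 / (x + j)))
        = 1 / x := by
      have hcongr : ∀ j : ℕ, ((1 / (1 + (j:ℝ)) - 1 / (x + 1 + j)) - (1 / (1 + (j:ℝ)) - 1 / (x + j)))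
          = 1 / (x + (j:ℝ)) ^ 1 - 1 / ((x + (j:ℝ)) + 1) ^ 1 := fun j => by
        rw [pow_one, pow_one]
        ring
      rw [tsum_congr hcongr, htel.tsum_eq, pow_one]
    rw [h3] at h4
    linarith

lemma hasDerivAt_inv_shift {c y : ℝ} (h : 0 < y + c) :
    HasDerivAt (fun z : ℝ => 1 / (z + c)) (-(1:ℝ) / (y + c) ^ 2) y := by
  have := hasDerivAt_one_div_pow_shift le_rfl h
  simpa [pow_one] using this

lemma hasDerivAt_U {m : ℕ} (hm : 2 ≤ m) {x : ℝ} (hx : 0 < x) :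
    HasDerivAt (U m) (-(m:ℝ) * U (m + 1) x) x := by
  set c := x / 2 with hcdef
  have hc0 : 0 < c := by positivity
  have hu : Summable (fun j : ℕ => (m:ℝ) * (1 / (c + j) ^ (m + 1))) :=
    (summable_U (by omega) hc0).mul_left _
  have hunif : TendstoUniformlyOn
      (fun (N : ℕ) (y : ℝ) => ∑ j ∈ range N, (-(m:ℝ) / (y + j) ^ (m + 1)))
      (fun y => ∑' j : ℕ, (-(m:ℝ) / (y + j) ^ (m + 1))) atTop (Set.Ioi c) := by
    apply tendstoUniformlyOn_tsum_nat hu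
    intro j y hy
    have hcy : c < y := hy
    have hj0 : (0:ℝ) ≤ j := Nat.cast_nonneg j
    have hyj : (0:ℝ) < y + j := by linarith
    have hcj : (0:ℝ) < c + j := by linarith
    have h1 : ‖-(m:ℝ) / (y + j) ^ (m + 1)‖ = (m:ℝ) / (y + j) ^ (m + 1) := by
      rw [Real.norm_eq_abs, abs_div, abs_neg, Nat.abs_cast, abs_of_pos (by positivity)]
    rw [h1]
    calc (m:ℝ) / (y + j) ^ (m + 1) ≤ (m:ℝ) / (c + j) ^ (m + 1) := by
          apply div_le_div_of_nonneg_left (Nat.cast_nonneg m) (by positivity)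
          exact pow_le_pow_left₀ hcj.le (by linarith) _
      _ = (m:ℝ) * (1 / (c + j) ^ (m + 1)) := by ring
  have hF : ∀ᶠ (n : ℕ) in atTop, ∀ y ∈ Set.Ioi c, HasDerivAt
      (fun z : ℝ => ∑ j ∈ range n, 1 / (z + j) ^ m)
      (∑ j ∈ range n, (-(m:ℝ) / (y + j) ^ (m + 1))) y := by
    filter_upwards with n
    intro y hy
    have hcy : c < y := hy
    exact HasDerivAt.fun_sum fun j _ => hasDerivAt_one_div_pow_shift (by omega)
      (by have : (0:ℝ) ≤ j := Nat.cast_nonneg j; linarith)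
  have hlim : ∀ y ∈ Set.Ioi c, Tendsto (fun n : ℕ => ∑ j ∈ range n, 1 / (y + (j:ℝ)) ^ m)
      atTop (nhds (U m y)) := fun y hy =>
    (summable_U hm (lt_trans hc0 hy)).hasSum.tendsto_sum_nat
  have hD := hasDerivAt_of_tendstoUniformlyOn isOpen_Ioi hunif hF hlim
    (show x ∈ Set.Ioi c from Set.mem_Ioi.mpr (by rw [hcdef]; linarith))
  have hval : ∑' j : ℕ, (-(m:ℝ) / (x + j) ^ (m + 1)) = -(m:ℝ) * U (m + 1) x := by
    rw [U, ← tsum_mul_left]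
    exact tsum_congr fun j => by ring
  rw [hval] at hD
  exact hD

lemma hasDerivAt_Vf {x : ℝ} (hx : 0 < x) : HasDerivAt Vf (U 2 x) x := by
  set c := x / 2 with hcdef
  have hc0 : 0 < c := by positivity
  have hu : Summable (fun j : ℕ => 1 / (c + (j:ℝ)) ^ 2) := summable_U le_rfl hc0
  have hunif : TendstoUniformlyOn
      (fun (N : ℕ) (y : ℝ) => ∑ j ∈ range N, (1 / (y + j) ^ 2))
      (fun y => ∑' j : ℕ, (1 / (y + j) ^ 2)) atTop (Set.Ioi c) := by
    apply tendstoUniformlyOn_tsum_nat hu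
    intro j y hy
    have hcy : c < y := hy
    have hj0 : (0:ℝ) ≤ j := Nat.cast_nonneg j
    have hyj : (0:ℝ) < y + j := by linarith
    have hcj : (0:ℝ) < c + j := by linarith
    rw [Real.norm_eq_abs, abs_of_pos (by positivity)]
    apply div_le_div_of_nonneg_left one_pos.le (by positivity)
    exact pow_le_pow_left₀ hcj.le (by linarith) _
  have hF : ∀ᶠ (n : ℕ) in atTop, ∀ y ∈ Set.Ioi c, HasDerivAt
      (fun z : ℝ => ∑ j ∈ range n, (1 / (1 + (j:ℝ)) - 1 / (z + j)))
      (∑ j ∈ range n, (1 / (y + j) ^ 2)) y := by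
    filter_upwards with n
    intro y hy
    have hcy : c < y := hy
    refine HasDerivAt.fun_sum fun j _ => ?_
    have hyj : (0:ℝ) < y + j := by have : (0:ℝ) ≤ j := Nat.cast_nonneg j; linarith
    have := (hasDerivAt_const y (1 / (1 + (j:ℝ)))).sub (hasDerivAt_inv_shift hyj)
    simpa [neg_div, Pi.sub_def] using this
  have hlim : ∀ y ∈ Set.Ioi c, Tendsto
      (fun n : ℕ => ∑ j ∈ range n, (1 / (1 + (j:ℝ)) - 1 / (y + j)))
      atTop (nhds (Vf y)) := fun y hy =>
    (summable_Vf (lt_trans hc0 hy)).hasSum.tendsto_sum_nat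
  exact hasDerivAt_of_tendstoUniformlyOn isOpen_Ioi hunif hF hlim
    (show x ∈ Set.Ioi c from Set.mem_Ioi.mpr (by rw [hcdef]; linarith))
lemma iteratedDeriv_digamma {k : ℕ} (hk : 1 ≤ k) {x : ℝ} (hx : 0 < x) :
    iteratedDeriv k digamma x = (-1) ^ (k + 1) * (k.factorial : ℝ) * U (k + 1) x := by
  induction k generalizing x with
  | zero => omega
  | succ k ih =>
    rcases Nat.eq_zero_or_pos k with rfl | hk1
    · rw [iteratedDeriv_one]
      have heq : digamma =ᶠ[nhds x] (fun y => digamma 1 + Vf y) := by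
        filter_upwards [isOpen_Ioi.mem_nhds hx] with y (hy : y ∈ Set.Ioi 0)
        exact digamma_eq hy
      rw [heq.deriv_eq, ((hasDerivAt_Vf hx).const_add (digamma 1)).deriv]
      norm_num
    · rw [iteratedDeriv_succ]
      have heq : iteratedDeriv k digamma =ᶠ[nhds x]
          (fun y => (-1) ^ (k + 1) * (k.factorial : ℝ) * U (k + 1) y) := by
        filter_upwards [isOpen_Ioi.mem_nhds hx] with y (hy : y ∈ Set.Ioi 0)
        exact ih hk1 hy
      rw [heq.deriv_eq,
        (((hasDerivAt_U (show 2 ≤ k + 1 by omega) hx)).const_mul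
          ((-1 : ℝ) ^ (k + 1) * (k.factorial : ℝ))).deriv]
      push_cast [Nat.factorial_succ]
      ring

end Stm

theorem stmt13 (k : ℕ) (a : ℝ) (ha : 0 ≤ a) :
    Filter.Tendsto
      (fun x : ℝ => x ^ (k + 1) * (iteratedDeriv k digamma (x + a) - iteratedDeriv k digamma x))
      Filter.atTop (nhds ((-1) ^ k * (k.factorial : ℝ) * a)) := by
  rcases eq_or_lt_of_le ha with rfl | ha'
  · simp only [add_zero, sub_self, mul_zero]
    exact tendsto_const_nhds
  · have hmain := Stm.tendsto_main (m := k + 1) (by omega) ha'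
    have hc := hmain.const_mul ((-1 : ℝ) ^ k * (k.factorial : ℝ))
    apply Filter.Tendsto.congr' _ hc
    filter_upwards [Filter.eventually_gt_atTop (0:ℝ)] with x hx
    have hxa : 0 < x + a := by linarith
    have hdiff : iteratedDeriv k digamma (x + a) - iteratedDeriv k digamma x
        = (-1 : ℝ) ^ k * (k.factorial : ℝ)
          * ∑' j : ℕ, (1 / (x + j) ^ (k + 1) - 1 / (x + a + j) ^ (k + 1)) := by
      rcases Nat.eq_zero_or_pos k with rfl | hk
      · simp only [iteratedDeriv_zero, zero_add, pow_one, pow_zero, one_mul,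
          Nat.factorial_zero, Nat.cast_one]
        exact Stm.digamma_sub_digamma ha' hx
      · rw [Stm.iteratedDeriv_digamma hk hxa, Stm.iteratedDeriv_digamma hk hx]
        have hS1 : Summable (fun j : ℕ => 1 / (x + (j:ℝ)) ^ (k + 1)) :=
          Stm.summable_U (by omega) hx
        have hS2 : Summable (fun j : ℕ => 1 / ((x + a) + (j:ℝ)) ^ (k + 1)) :=
          Stm.summable_U (by omega) hxa
        have he : ∑' j : ℕ, (1 / (x + (j:ℝ)) ^ (k + 1) - 1 / (x + a + j) ^ (k + 1))
            = Stm.U (k + 1) x - Stm.U (k + 1) (x + a) := by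
          rw [Stm.U, Stm.U]
          exact hS1.tsum_sub hS2
        rw [he]
        ring
    rw [hdiff]
    ring
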